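/- Let $F$ be a finite set and let $(X_i)_{i\in F}$, $(X'_i)_{i\in F}$, and $(X_{j(i)})_{i,j\in F}$ be collections of nonnegative random variables with finite moment generating functions, defined on the same probability space, satisfying: (a) for all $i$, $X_i \le X'_i$; (b) for all $i$, the random variables $X'_i$ and $\sum_{j\in F} X_{j(i)}$ are independent; (c) for all $i$, $\sum_{j\in F} X_{j(i)} \le \sum_{j\in F} X_j$; (d) there is a constant $a > 0$ such that for all $i$, on the event $\{X_i > 0\}$ one has $\sum_{j\in F} X_j \le a + \sum_{j\in F} X_{j(i)}$. Let $\lambda := \sum_{i\in F} \mathbb{E}(X'_i)$. Then for any $t > 0$, $\mathbb{P}\big(\sum_{i\in F} X_i \ge t\big) \le \exp\big(-\frac{t}{a}\log\frac{t}{3\lambda}\big)$. -/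

import Mathlib

open MeasureTheory ProbabilityTheory Real

private lemma aux_aemeasurable {Ω : Type*} [MeasurableSpace Ω] {μ : Measure Ω} {f : Ω → ℝ}
    (h : Integrable (fun ω => Real.exp (1 * f ω)) μ) : AEMeasurable f μ := by
  have h2 : AEMeasurable (fun ω => Real.log (Real.exp (1 * f ω))) μ :=
    Real.measurable_log.comp_aemeasurable h.aemeasurable
  simpa [Real.log_exp] using h2

private lemma aux_sum_mgf {Ω : Type*} [MeasurableSpace Ω] (μ : Measure Ω)
    [IsProbabilityMeasure μ] {F : Type*} [Fintype F] (f : F → Ω → ℝ)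
    (hnn : ∀ i ω, 0 ≤ f i ω) (hmeas : ∀ i, AEMeasurable (f i) μ)
    (hmgf : ∀ i, ∀ θ : ℝ, 0 ≤ θ → Integrable (fun ω => Real.exp (θ * f i ω)) μ)
    (θ : ℝ) (hθ : 0 ≤ θ) : Integrable (fun ω => Real.exp (θ * ∑ i, f i ω)) μ := by
  rcases isEmpty_or_nonempty F with hF | hF
  · simp only [Finset.univ_eq_empty, Finset.sum_empty, mul_zero, Real.exp_zero]
    exact integrable_const 1
  · set n : ℝ := (Fintype.card F : ℝ) with hn
    have hmeasS : AEMeasurable (fun ω => ∑ i, f i ω) μ :=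
      Finset.aemeasurable_fun_sum _ fun i _ => hmeas i
    refine Integrable.mono' (integrable_finset_sum Finset.univ
      (fun i _ => hmgf i (n * θ) (by positivity))) ?_ ?_
    · exact (Real.measurable_exp.comp_aemeasurable (hmeasS.const_mul θ)).aestronglyMeasurable
    · filter_upwards with ω
      rw [Real.norm_eq_abs, abs_of_nonneg (Real.exp_nonneg _)]
      obtain ⟨j, -, hj⟩ := Finset.exists_max_image Finset.univ (fun i => f i ω)
        Finset.univ_nonempty
      have h1 : ∑ i, f i ω ≤ n * f j ω := by
        calc ∑ i, f i ω ≤ ∑ _i : F, f j ω :=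
              Finset.sum_le_sum fun i _ => hj i (Finset.mem_univ i)
          _ = n * f j ω := by rw [Finset.sum_const, Finset.card_univ, hn, nsmul_eq_mul]
      calc Real.exp (θ * ∑ i, f i ω) ≤ Real.exp ((n * θ) * f j ω) := by
            apply Real.exp_le_exp.mpr
            nlinarith [mul_le_mul_of_nonneg_left h1 hθ]
        _ ≤ ∑ i, Real.exp ((n * θ) * f i ω) :=
            Finset.single_le_sum (f := fun i => Real.exp ((n * θ) * f i ω))
              (fun i _ => (Real.exp_nonneg _)) (Finset.mem_univ j)

/-- **Theorem 3.1** (second inequality): a generic concentration inequality for sums of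
dependent nonnegative random variables. -/
theorem dependent_sum_tail' {Ω : Type*} [MeasurableSpace Ω] (μ : Measure Ω)
    [IsProbabilityMeasure μ] {F : Type*} [Fintype F]
    (X X' : F → Ω → ℝ) (Xc : F → F → Ω → ℝ)
    (hXnn : ∀ i ω, 0 ≤ X i ω) (hX'nn : ∀ i ω, 0 ≤ X' i ω) (hXcnn : ∀ i j ω, 0 ≤ Xc i j ω)
    (hmgfX : ∀ i, ∀ θ : ℝ, 0 ≤ θ → Integrable (fun ω => Real.exp (θ * X i ω)) μ)
    (hmgfX' : ∀ i, ∀ θ : ℝ, 0 ≤ θ → Integrable (fun ω => Real.exp (θ * X' i ω)) μ)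
    (hmgfXc : ∀ i j, ∀ θ : ℝ, 0 ≤ θ → Integrable (fun ω => Real.exp (θ * Xc i j ω)) μ)
    (ha : ∀ i ω, X i ω ≤ X' i ω)
    (hb : ∀ i, IndepFun (X' i) (fun ω => ∑ j, Xc i j ω) μ)
    (hc : ∀ i ω, ∑ j, Xc i j ω ≤ ∑ j, X j ω)
    (a : ℝ) (hapos : 0 < a)
    (hd : ∀ i ω, 0 < X i ω → ∑ j, X j ω ≤ a + ∑ j, Xc i j ω)
    (lam : ℝ) (hlam : lam = ∑ i, ∫ ω, X' i ω ∂μ)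
    (t : ℝ) (ht : 0 < t) :
    μ {ω | t ≤ ∑ i, X i ω} ≤
      ENNReal.ofReal (Real.exp (-(t / a) * Real.log (t / (3 * lam)))) := by
  classical
  have hlamnn : 0 ≤ lam := by
    rw [hlam]; exact Finset.sum_nonneg fun i _ => integral_nonneg (hX'nn i)
  by_cases hL : Real.log (t / (3 * lam)) ≤ 0
  · -- trivial case: the bound exceeds 1
    refine le_trans prob_le_one ?_
    rw [ENNReal.one_le_ofReal]
    apply Real.one_le_exp
    nlinarith [div_pos ht hapos]
  push_neg at hL
  -- From hL, deduce lam > 0 and 3 * lam < t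
  have hlam_pos : 0 < lam := by
    rcases hlamnn.eq_or_lt with h0 | h0
    · exfalso; rw [← h0] at hL; simp at hL
    · exact h0
  have ht3 : 3 * lam < t := by
    by_contra hcon
    push_neg at hcon
    have : t / (3 * lam) ≤ 1 := by
      rw [div_le_one (by positivity)]; exact hcon
    exact absurd (Real.log_nonpos (by positivity) this) (not_le.mpr hL)
  -- Setup
  set S : Ω → ℝ := fun ω => ∑ i, X i ω with hS
  set Sc : F → Ω → ℝ := fun i ω => ∑ j, Xc i j ω with hScdef
  have haeX : ∀ i, AEMeasurable (X i) μ := fun i => aux_aemeasurable (hmgfX i 1 zero_le_one)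
  have haeX' : ∀ i, AEMeasurable (X' i) μ := fun i => aux_aemeasurable (hmgfX' i 1 zero_le_one)
  have haeXc : ∀ i j, AEMeasurable (Xc i j) μ :=
    fun i j => aux_aemeasurable (hmgfXc i j 1 zero_le_one)
  have haeS : AEMeasurable S μ := Finset.aemeasurable_fun_sum _ fun i _ => haeX i
  have haeSc : ∀ i, AEMeasurable (Sc i) μ :=
    fun i => Finset.aemeasurable_fun_sum _ fun j _ => haeXc i j
  have hSnn : ∀ ω, 0 ≤ S ω := fun ω => Finset.sum_nonneg fun i _ => hXnn i ω
  have hSint : ∀ θ : ℝ, 0 ≤ θ → Integrable (fun ω => Real.exp (θ * S ω)) μ :=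
    fun θ hθ => aux_sum_mgf μ X hXnn haeX hmgfX θ hθ
  have hScint : ∀ i, ∀ θ : ℝ, 0 ≤ θ → Integrable (fun ω => Real.exp (θ * Sc i ω)) μ :=
    fun i θ hθ => aux_sum_mgf μ (Xc i) (hXcnn i) (haeXc i) (hmgfXc i) θ hθ
  have hX'int : ∀ i, Integrable (X' i) μ := by
    intro i
    refine Integrable.mono' (hmgfX' i 1 zero_le_one) (haeX' i).aestronglyMeasurable ?_
    filter_upwards with ω
    rw [Real.norm_eq_abs, abs_of_nonneg (hX'nn i ω), one_mul]
    linarith [Real.add_one_le_exp (X' i ω)]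
  set G : ℝ → ℝ := fun θ => ∫ ω, Real.exp (θ * S ω) ∂μ with hGdef
  have hGnn : ∀ θ, 0 ≤ G θ := fun θ => integral_nonneg fun ω => Real.exp_nonneg _
  have hG0 : G 0 = 1 := by
    simp [hGdef]
  have hSexp_int : ∀ θ : ℝ, 0 ≤ θ → Integrable (fun ω => S ω * Real.exp (θ * S ω)) μ := by
    intro θ hθ
    refine Integrable.mono' (hSint (θ + 1) (by linarith))
      ((haeS.mul (Real.measurable_exp.comp_aemeasurable
        (haeS.const_mul θ))).aestronglyMeasurable) ?_
    filter_upwards with ω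
    rw [Real.norm_eq_abs, abs_of_nonneg (mul_nonneg (hSnn ω) (Real.exp_nonneg _))]
    have h2 : S ω ≤ Real.exp (S ω) := by linarith [Real.add_one_le_exp (S ω)]
    calc S ω * Real.exp (θ * S ω) ≤ Real.exp (S ω) * Real.exp (θ * S ω) :=
          mul_le_mul_of_nonneg_right h2 (Real.exp_nonneg _)
      _ = Real.exp ((θ + 1) * S ω) := by rw [← Real.exp_add]; ring_nf
  -- derivative of G
  have hGderiv : ∀ θ : ℝ, 0 ≤ θ →
      HasDerivAt G (∫ ω, S ω * Real.exp (θ * S ω) ∂μ) θ := by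
    intro θ hθ
    have key := hasDerivAt_integral_of_dominated_loc_of_deriv_le (μ := μ)
      (F := fun x ω => Real.exp (x * S ω)) (F' := fun x ω => S ω * Real.exp (x * S ω))
      (x₀ := θ) (bound := fun ω => Real.exp ((θ + 2) * S ω)) (s := Metric.ball θ 1) (Metric.ball_mem_nhds θ one_pos)
      (Filter.Eventually.of_forall fun x =>
        (Real.measurable_exp.comp_aemeasurable (haeS.const_mul x)).aestronglyMeasurable)
      (hSint θ hθ)
      ((haeS.mul (Real.measurable_exp.comp_aemeasurable
        (haeS.const_mul θ))).aestronglyMeasurable)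
      ?_ (hSint (θ + 2) (by linarith)) ?_
    · exact key.2
    · filter_upwards with ω
      intro x hx
      rw [Real.norm_eq_abs, abs_of_nonneg (mul_nonneg (hSnn ω) (Real.exp_nonneg _))]
      have hx1 : x ≤ θ + 1 := by
        have := abs_lt.mp (by simpa [Real.dist_eq] using Metric.mem_ball.mp hx)
        linarith [this.2]
      have h1 : Real.exp (x * S ω) ≤ Real.exp ((θ + 1) * S ω) :=
        Real.exp_le_exp.mpr (mul_le_mul_of_nonneg_right hx1 (hSnn ω))
      have h2 : S ω ≤ Real.exp (S ω) := by linarith [Real.add_one_le_exp (S ω)]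
      calc S ω * Real.exp (x * S ω) ≤ Real.exp (S ω) * Real.exp ((θ + 1) * S ω) :=
            mul_le_mul h2 h1 (Real.exp_nonneg _) (Real.exp_nonneg _)
        _ = Real.exp ((θ + 2) * S ω) := by rw [← Real.exp_add]; ring_nf
    · filter_upwards with ω
      intro x hx
      have h := (hasDerivAt_mul_const (S ω) (x := x)).exp
      simpa [mul_comm] using h
  -- key differential inequality
  have hkey : ∀ θ : ℝ, 0 ≤ θ →
      (∫ ω, S ω * Real.exp (θ * S ω) ∂μ) ≤ lam * Real.exp (θ * a) * G θ := by
    intro θ hθ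
    have hind : ∀ i, IndepFun (X' i) (fun ω => Real.exp (θ * Sc i ω)) μ := fun i =>
      (hb i).comp measurable_id (Real.measurable_exp.comp (measurable_const_mul θ))
    have hgint : ∀ i : F, Integrable (fun ω => X' i ω * Real.exp (θ * Sc i ω)) μ := by
      intro i
      exact (hind i).integrable_mul (hX'int i) (hScint i θ hθ)
    have hpoint : ∀ ω, S ω * Real.exp (θ * S ω) ≤
        ∑ i, Real.exp (θ * a) * (X' i ω * Real.exp (θ * Sc i ω)) := by
      intro ω
      calc S ω * Real.exp (θ * S ω) = ∑ i, X i ω * Real.exp (θ * S ω) :=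
            Finset.sum_mul _ _ _
        _ ≤ ∑ i, Real.exp (θ * a) * (X' i ω * Real.exp (θ * Sc i ω)) := by
            refine Finset.sum_le_sum fun i _ => ?_
            rcases (hXnn i ω).eq_or_lt with h0 | h0
            · rw [← h0, zero_mul]
              have := hX'nn i ω
              positivity
            · have h1 : X i ω ≤ X' i ω := ha i ω
              have h2 : S ω ≤ a + Sc i ω := hd i ω h0
              have h3 : Real.exp (θ * S ω) ≤ Real.exp (θ * a) * Real.exp (θ * Sc i ω) := by
                rw [← Real.exp_add]
                apply Real.exp_le_exp.mpr
                nlinarith [mul_le_mul_of_nonneg_left h2 hθ]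
              calc X i ω * Real.exp (θ * S ω)
                  ≤ X' i ω * (Real.exp (θ * a) * Real.exp (θ * Sc i ω)) :=
                    mul_le_mul h1 h3 (Real.exp_nonneg _) ((hXnn i ω).trans h1)
                _ = Real.exp (θ * a) * (X' i ω * Real.exp (θ * Sc i ω)) := by ring
    have hR : Integrable (fun ω => ∑ i, Real.exp (θ * a) *
        (X' i ω * Real.exp (θ * Sc i ω))) μ :=
      integrable_finset_sum _ fun i _ => ((hgint i).const_mul _)
    have hInt := integral_mono (hSexp_int θ hθ) hR hpoint
    rw [integral_finset_sum _ (fun i _ => ((hgint i).const_mul _))] at hInt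
    have heq : ∀ i : F, ∫ ω, Real.exp (θ * a) * (X' i ω * Real.exp (θ * Sc i ω)) ∂μ
        = Real.exp (θ * a) * ((∫ ω, X' i ω ∂μ) * ∫ ω, Real.exp (θ * Sc i ω) ∂μ) := by
      intro i
      rw [integral_const_mul]
      congr 1
      exact (hind i).integral_fun_mul_eq_mul_integral (haeX' i).aestronglyMeasurable
        (Real.measurable_exp.comp_aemeasurable ((haeSc i).const_mul θ)).aestronglyMeasurable
    have hEexp : ∀ i : F, (∫ ω, Real.exp (θ * Sc i ω) ∂μ) ≤ G θ := by
      intro i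
      refine integral_mono (hScint i θ hθ) (hSint θ hθ) fun ω => ?_
      exact Real.exp_le_exp.mpr (mul_le_mul_of_nonneg_left (hc i ω) hθ)
    calc ∫ ω, S ω * Real.exp (θ * S ω) ∂μ
        ≤ ∑ i, ∫ ω, Real.exp (θ * a) * (X' i ω * Real.exp (θ * Sc i ω)) ∂μ := hInt
      _ = ∑ i, Real.exp (θ * a) * ((∫ ω, X' i ω ∂μ) * ∫ ω, Real.exp (θ * Sc i ω) ∂μ) :=
          Finset.sum_congr rfl fun i _ => heq i
      _ ≤ ∑ i, Real.exp (θ * a) * ((∫ ω, X' i ω ∂μ) * G θ) := by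
          refine Finset.sum_le_sum fun i _ => ?_
          have h1 : 0 ≤ ∫ ω, X' i ω ∂μ := integral_nonneg (hX'nn i)
          exact mul_le_mul_of_nonneg_left (mul_le_mul_of_nonneg_left (hEexp i) h1)
            (Real.exp_nonneg _)
      _ = (∑ i, ∫ ω, X' i ω ∂μ) * Real.exp (θ * a) * G θ := by
          rw [Finset.sum_mul, Finset.sum_mul]
          exact Finset.sum_congr rfl fun i _ => by ring
      _ = lam * Real.exp (θ * a) * G θ := by rw [hlam]
  -- Gronwall
  set θs : ℝ := Real.log (t / lam) / a with hθsdef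
  have hloglam : 0 < Real.log (t / lam) :=
    Real.log_pos ((one_lt_div hlam_pos).mpr (by linarith))
  have hθpos : 0 < θs := div_pos hloglam hapos
  set ψ : ℝ → ℝ := fun θ => lam / a * (Real.exp (θ * a) - 1) with hψdef
  have hψderiv : ∀ θ : ℝ, HasDerivAt ψ (lam * Real.exp (θ * a)) θ := by
    intro θ
    have h1 : HasDerivAt (fun x : ℝ => Real.exp (x * a)) (Real.exp (θ * a) * a) θ :=
      (hasDerivAt_mul_const a).exp
    have h2 := (h1.sub_const 1).const_mul (lam / a)
    refine h2.congr_deriv ?_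
    rw [div_mul_eq_mul_div, div_eq_iff hapos.ne']
    ring
  set H : ℝ → ℝ := fun θ => G θ * Real.exp (-ψ θ) with hHdef
  have hHderiv : ∀ θ : ℝ, 0 ≤ θ → HasDerivAt H
      ((∫ ω, S ω * Real.exp (θ * S ω) ∂μ) * Real.exp (-ψ θ) +
        G θ * (Real.exp (-ψ θ) * -(lam * Real.exp (θ * a)))) θ :=
    fun θ hθ => (hGderiv θ hθ).mul ((hψderiv θ).neg.exp)
  have hHanti : AntitoneOn H (Set.Icc 0 θs) := by
    refine antitoneOn_of_deriv_nonpos (convex_Icc 0 θs) ?_ ?_ ?_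
    · intro θ hθ
      exact ((hHderiv θ hθ.1).differentiableAt.continuousAt).continuousWithinAt
    · intro θ hθ
      rw [interior_Icc] at hθ
      exact (hHderiv θ hθ.1.le).differentiableAt.differentiableWithinAt
    · intro θ hθ
      rw [interior_Icc] at hθ
      rw [(hHderiv θ hθ.1.le).deriv]
      have h1 := hkey θ hθ.1.le
      have h2 := hGnn θ
      nlinarith [Real.exp_nonneg (-ψ θ), Real.exp_nonneg (θ * a),
        mul_le_mul_of_nonneg_right h1 (Real.exp_nonneg (-ψ θ))]
  have hH0 : H 0 = 1 := by
    simp [hHdef, hψdef, hG0]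
  have hHθs : H θs ≤ 1 := by
    rw [← hH0]
    exact hHanti (Set.mem_Icc.mpr ⟨le_refl 0, hθpos.le⟩)
      (Set.mem_Icc.mpr ⟨hθpos.le, le_refl θs⟩) hθpos.le
  have hGbound : G θs ≤ Real.exp (ψ θs) := by
    have h := hHθs
    rw [hHdef] at h
    simp only at h
    rw [Real.exp_neg, ← div_eq_mul_inv, div_le_one (Real.exp_pos _)] at h
    exact h
  -- Chernoff
  have hcher := measure_ge_le_exp_mul_mgf (μ := μ) (X := S) (ε := t) hθpos.le
    (hSint θs hθpos.le)
  have hmgfG : mgf S μ θs = G θs := rfl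
  rw [hmgfG] at hcher
  -- numeric computation
  have hθsa : θs * a = Real.log (t / lam) := div_mul_cancel₀ _ hapos.ne'
  have hψval : ψ θs = (t - lam) / a := by
    rw [hψdef]
    simp only
    rw [hθsa, Real.exp_log (div_pos ht hlam_pos)]
    field_simp
  have hlogsplit : Real.log (t / lam) = Real.log 3 + Real.log (t / (3 * lam)) := by
    rw [← Real.log_mul (by norm_num) (ne_of_gt (div_pos ht (by positivity)))]
    congr 1
    field_simp
  have hlog3 : 1 ≤ Real.log 3 := by
    rw [Real.le_log_iff_exp_le (by norm_num)]
    have := Real.exp_one_lt_d9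
    linarith
  have hfinal : Real.exp (-θs * t) * Real.exp (ψ θs) ≤
      Real.exp (-(t / a) * Real.log (t / (3 * lam))) := by
    rw [← Real.exp_add]
    apply Real.exp_le_exp.mpr
    rw [hψval, hθsdef, hlogsplit]
    have h1 : t ≤ t * Real.log 3 := by nlinarith [mul_le_mul_of_nonneg_left hlog3 ht.le]
    have h2 : -((Real.log 3 + Real.log (t / (3 * lam))) / a) * t + (t - lam) / a -
        -(t / a) * Real.log (t / (3 * lam)) = (t - lam - t * Real.log 3) / a := by
      field_simp
      ring
    have h3 : (t - lam - t * Real.log 3) / a ≤ 0 :=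
      div_nonpos_of_nonpos_of_nonneg (by linarith) hapos.le
    linarith
  -- assemble
  have htoReal : (μ {ω | t ≤ S ω}).toReal ≤
      Real.exp (-(t / a) * Real.log (t / (3 * lam))) := by
    refine hcher.trans (le_trans ?_ hfinal)
    exact mul_le_mul_of_nonneg_left hGbound (Real.exp_nonneg _)
  calc μ {ω | t ≤ ∑ i, X i ω} = ENNReal.ofReal ((μ {ω | t ≤ S ω}).toReal) :=
        (ENNReal.ofReal_toReal (measure_ne_top μ _)).symm
    _ ≤ ENNReal.ofReal (Real.exp (-(t / a) * Real.log (t / (3 * lam)))) :=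
        ENNReal.ofReal_le_ofReal htoReal
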